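/- Let m ≥ 3 and let n ≥ 4 be even. For every i with 0 ≤ i ≤ m−1 and every pair of distinct j, j' ∈ Z/nZ, the Cartesian product P_m □ C_n has a 2-factor consisting of two cycles that separates the pair {u_{i,j}, u_{i,j'}}. -/

import Mathlib

open SimpleGraph

/-- `H` is a 2-factor of `X`: a spanning subgraph of `X` (on the same vertex set)
in which every vertex has valency 2. -/
def IsTwoFactor {V : Type*} (X H : SimpleGraph V) : Prop :=
  H ≤ X ∧ ∀ v : V, (H.neighborSet v).ncard = 2

/-- The 2-factor `H` separates the vertex set `A`: every connected component (cycle)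
of `H` contains exactly one vertex of `A`; in particular `H` consists of exactly
`A.card` cycles, each containing exactly one vertex of `A`. -/
def SeparatesSet {V : Type*} (H : SimpleGraph V) (A : Finset V) : Prop :=
  ∀ C : H.ConnectedComponent, ∃! a : V, a ∈ A ∧ H.connectedComponentMk a = C

/-- A graph `X` is `k`-spanning cyclable if for every set `A` of `k` distinct vertices
there is a 2-factor of `X` consisting of `k` cycles such that each vertex of `A`
belongs to a distinct cycle. -/
def SpanningCyclable {V : Type*} (X : SimpleGraph V) (k : ℕ) : Prop :=
  ∀ A : Finset V, A.card = k → ∃ H : SimpleGraph V, IsTwoFactor X H ∧ SeparatesSet H A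

/-- The cycle `C_n` on vertex set `ZMod n`: `x` and `y` are adjacent iff `x - y ∈ {1, -1}`. -/
def cycleZMod (n : ℕ) : SimpleGraph (ZMod n) :=
  SimpleGraph.circulantGraph ({1, -1} : Set (ZMod n))

/-- The pseudo-Cartesian product `C_m □_ℓ C_n`: start with `P_m □ C_n` (columns indexed by
`Fin m`, rows by `ZMod n`) and add the edges from `u_{m-1,j}` to `u_{0,j+ℓ}`.
When `ℓ = 0` this is the Cartesian product `C_m □ C_n`. -/
def pseudoProd (m n : ℕ) (l : ZMod n) : SimpleGraph (Fin m × ZMod n) :=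
  SimpleGraph.fromRel (fun u v =>
    (u.1 = v.1 ∧ v.2 = u.2 + 1) ∨
    ((u.1 : ℕ) + 1 = (v.1 : ℕ) ∧ u.2 = v.2) ∨
    ((u.1 : ℕ) = m - 1 ∧ (v.1 : ℕ) = 0 ∧ v.2 = u.2 + l))

namespace St5


def AdjGrid (x y : ℕ × ℕ) : Prop :=
  (x.1 = y.1 ∧ (x.2 + 1 = y.2 ∨ y.2 + 1 = x.2)) ∨
  (x.2 = y.2 ∧ (x.1 + 1 = y.1 ∨ y.1 + 1 = x.1))

/-- The snake Hamiltonian cycle on the `m × t` grid (`t` even), as a function of time. -/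
def Fsnake (m t u : ℕ) : ℕ × ℕ :=
  if u < m then (u, 0)
  else if u < m + (t-2)*(m-1) then
    (if ((u - m) / (m-1)) % 2 = 0 then m - 1 - ((u - m) % (m-1)) else (u - m) % (m-1) + 1,
      (u - m)/(m-1) + 1)
  else if u < 2*m + (t-2)*(m-1) then (2*m + (t-2)*(m-1) - 1 - u, t-1)
  else (0, m*t - u)

def Gsnake (m t : ℕ) (x : ℕ × ℕ) : ℕ :=
  if x.2 = 0 then x.1
  else if x.2 = t - 1 then 2*m + (t-2)*(m-1) - 1 - x.1
  else if x.1 = 0 then m*t - x.2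
  else m + (x.2 - 1)*(m-1) + (if x.2 % 2 = 1 then m - 1 - x.1 else x.1 - 1)

section Snake

variable {m t : ℕ} (hm : 3 ≤ m) (ht : 2 ≤ t)

include hm ht in
lemma tot : m * t = 2*m + (t-2)*(m-1) + (t-2) := by
  obtain ⟨t', rfl⟩ : ∃ t', t = t' + 2 := ⟨t - 2, by omega⟩
  obtain ⟨m', rfl⟩ : ∃ m', m = m' + 3 := ⟨m - 3, by omega⟩
  have h1 : t' + 2 - 2 = t' := rfl
  have h2 : m' + 3 - 1 = m' + 2 := rfl
  rw [h1, h2]; ring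

include hm in
lemma div_mod_eq {a q p : ℕ} (h : a = q * (m-1) + p) (hp : p < m - 1) :
    a / (m - 1) = q ∧ a % (m-1) = p := by
  subst h
  rw [show q * (m-1) + p = p + (m-1) * q by ring]
  rw [Nat.add_mul_div_left _ _ (by omega : 0 < m - 1), Nat.add_mul_mod_self_left,
    Nat.div_eq_of_lt hp, Nat.mod_eq_of_lt hp]
  omega

include hm in
lemma piece2_decomp {u : ℕ} (hu1 : m ≤ u) (hu2 : u < m + (t-2)*(m-1)) :
    ∃ q p, u - m = q * (m-1) + p ∧ p < m - 1 ∧ q < t - 2 := by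
  have h := Nat.div_add_mod (u - m) (m-1)
  rw [Nat.mul_comm] at h
  refine ⟨(u - m) / (m-1), (u - m) % (m-1), by omega, Nat.mod_lt _ (by omega), ?_⟩
  rw [Nat.div_lt_iff_lt_mul (by omega : 0 < m - 1)]
  omega

lemma F1 {u : ℕ} (h : u < m) : Fsnake m t u = (u, 0) := if_pos h

include hm in
lemma F2 {u q p : ℕ} (h1 : m ≤ u) (h2 : u < m + (t-2)*(m-1))
    (hqp : u - m = q * (m-1) + p) (hp : p < m - 1) :
    Fsnake m t u = (if q % 2 = 0 then m - 1 - p else p + 1, q + 1) := by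
  obtain ⟨hd, hmo⟩ := div_mod_eq hm hqp hp
  rw [Fsnake, if_neg (by omega), if_pos h2, hd, hmo]

lemma F3 {u : ℕ} (h1 : m + (t-2)*(m-1) ≤ u) (h2 : u < 2*m + (t-2)*(m-1)) :
    Fsnake m t u = (2*m + (t-2)*(m-1) - 1 - u, t - 1) := by
  rw [Fsnake, if_neg (by omega), if_neg (by omega), if_pos h2]

lemma F4 {u : ℕ} (h1 : 2*m + (t-2)*(m-1) ≤ u) : Fsnake m t u = (0, m*t - u) := by
  rw [Fsnake, if_neg (by omega), if_neg (by omega), if_neg (by omega)]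

include hm ht in
lemma Fsnake_range {u : ℕ} (hu : u < m * t) : (Fsnake m t u).1 < m ∧ (Fsnake m t u).2 < t := by
  have htot := tot hm ht
  by_cases h1 : u < m
  · rw [F1 h1]; exact ⟨h1, by omega⟩
  · by_cases h2 : u < m + (t-2)*(m-1)
    · obtain ⟨q, p, hqp, hp, hq⟩ := piece2_decomp hm (by omega) h2
      rw [F2 hm (by omega) h2 hqp hp]
      constructor
      · by_cases hpar : q % 2 = 0
        · rw [if_pos hpar]; omega
        · rw [if_neg hpar]; omega
      · omega
    · by_cases h3 : u < 2*m + (t-2)*(m-1)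
      · rw [F3 (by omega) h3]; exact ⟨by omega, by omega⟩
      · rw [F4 (by omega)]; exact ⟨by omega, by omega⟩

include hm ht in
lemma Fsnake_leftInv {u : ℕ} (hu : u < m * t) : Gsnake m t (Fsnake m t u) = u := by
  have htot := tot hm ht
  by_cases h1 : u < m
  · rw [F1 h1, Gsnake]; simp
  · by_cases h2 : u < m + (t-2)*(m-1)
    · obtain ⟨q, p, hqp, hp, hq⟩ := piece2_decomp hm (by omega) h2
      rw [F2 (u := u) hm (by omega) h2 hqp hp]
      by_cases hpar : q % 2 = 0
      · rw [if_pos hpar, Gsnake]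
        rw [if_neg (by omega), if_neg (by omega), if_neg (by omega)]
        simp only [Nat.add_sub_cancel]
        rw [if_pos (by omega)]; omega
      · rw [if_neg hpar, Gsnake]
        rw [if_neg (by omega), if_neg (by omega), if_neg (by omega)]
        simp only [Nat.add_sub_cancel]
        rw [if_neg (by omega)]; omega
    · by_cases h3 : u < 2*m + (t-2)*(m-1)
      · rw [F3 (u := u) (by omega) h3, Gsnake]
        rw [if_neg (by omega), if_pos (by omega)]
        omega
      · rw [F4 (u := u) (by omega), Gsnake]
        rw [if_neg (by omega), if_neg (by omega), if_pos (by omega)]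
        omega

include hm ht in
lemma Fsnake_inj {u v : ℕ} (hu : u < m * t) (hv : v < m * t)
    (h : Fsnake m t u = Fsnake m t v) : u = v := by
  rw [← Fsnake_leftInv hm ht hu, ← Fsnake_leftInv hm ht hv, h]

lemma Fsnake_zero (hm0 : 0 < m) : Fsnake m t 0 = (0, 0) := F1 hm0

include hm ht in
lemma Fsnake_last : Fsnake m t (m*t - 1) = (0, 1) := by
  have htot := tot hm ht
  by_cases h : t = 2
  · subst h
    rw [F3 (u := m*2-1) (by omega) (by omega), Prod.mk.injEq]
    exact ⟨by omega, by omega⟩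
  · rw [F4 (u := m*t-1) (by omega), Prod.mk.injEq]
    exact ⟨rfl, by omega⟩

include hm ht in
lemma Fsnake_adj (heven : t % 2 = 0) {u : ℕ} (hu : u + 1 < m * t) :
    AdjGrid (Fsnake m t u) (Fsnake m t (u + 1)) := by
  have htot := tot hm ht
  by_cases h1 : u + 1 < m
  · rw [F1 (u := u) (by omega), F1 h1]; unfold AdjGrid; omega
  · by_cases h1' : u + 1 = m
    · -- vertical step from (m-1,0) to (m-1,1)
      rw [F1 (u := u) (by omega)]
      by_cases ht2 : t = 2
      · subst ht2
        rw [F3 (u := u+1) (by omega) (by omega)]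
        unfold AdjGrid; omega
      · have hX : 1 * 1 ≤ (t-2)*(m-1) := Nat.mul_le_mul (show 1 ≤ t-2 by omega) (show 1 ≤ m-1 by omega)
        rw [F2 (u := u+1) (q := 0) (p := 0) hm (by omega) (by omega) (by omega) (by omega),
          if_pos (by norm_num)]
        unfold AdjGrid; omega
    · by_cases h2 : u + 1 < m + (t-2)*(m-1)
      · -- u and u+1 both in piece 2
        obtain ⟨q, p, hqp, hp, hq⟩ := piece2_decomp (t := t) (u := u) hm (by omega) (by omega)
        by_cases hp1 : p + 1 < m - 1
        · rw [F2 (u := u) hm (by omega) (by omega) hqp hp,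
            F2 (u := u+1) (q := q) (p := p+1) hm (by omega) h2 (by omega) hp1]
          by_cases hpar : q % 2 = 0
          · rw [if_pos hpar, if_pos hpar]; unfold AdjGrid; omega
          · rw [if_neg hpar, if_neg hpar]; unfold AdjGrid; omega
        · -- p + 1 = m - 1 : wrap to next row
          have e1 : (q+1)*(m-1) = q*(m-1) + (m-1) := by ring
          have hq1 : (u+1) - m = (q+1) * (m-1) + 0 := by omega
          rw [F2 (u := u) hm (by omega) (by omega) hqp hp,
            F2 (u := u+1) hm (by omega) h2 hq1 (by omega)]
          by_cases hpar : q % 2 = 0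
          · rw [if_pos hpar, if_neg (by omega : ¬((q+1) % 2 = 0))]
            unfold AdjGrid; omega
          · rw [if_neg hpar, if_pos (by omega : (q+1) % 2 = 0)]
            unfold AdjGrid; omega
      · by_cases h2' : u + 1 = m + (t-2)*(m-1)
        · -- last of piece2 (only when t > 2) into piece 3
          obtain ⟨q, p, hqp, hp, hq⟩ := piece2_decomp hm (by omega) (by omega : u < m + (t-2)*(m-1))
          have e1 : (q+1)*(m-1) = q*(m-1) + (m-1) := by ring
          have e2 : (t-2)*(m-1) = (t-3)*(m-1) + (m-1) := by
            have h' : t - 2 = (t-3) + 1 := by omega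
            rw [h']; ring
          have hq3 : q = t - 3 := by
            rcases Nat.lt_or_ge q (t-3) with h | h
            · exfalso
              have e3 : (q+2)*(m-1) = q*(m-1) + 2*(m-1) := by ring
              have hle := Nat.mul_le_mul_right (m-1) (show q + 2 ≤ t - 2 by omega)
              omega
            · omega
          subst hq3
          have hp2 : p = m - 2 := by omega
          subst hp2
          rw [F2 (u := u) hm (by omega) (by omega) hqp hp,
            F3 (u := u+1) (by omega) (by omega),
            if_neg (by omega : ¬((t-3) % 2 = 0))]
          unfold AdjGrid; omega
        · by_cases h3 : u + 1 < 2*m + (t-2)*(m-1)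
          · rw [F3 (u := u) (by omega) (by omega), F3 (u := u+1) (by omega) h3]
            unfold AdjGrid; omega
          · by_cases h3' : u + 1 = 2*m + (t-2)*(m-1)
            · rw [F3 (u := u) (by omega) (by omega), F4 (u := u+1) (by omega)]
              unfold AdjGrid; omega
            · rw [F4 (u := u) (by omega), F4 (u := u+1) (by omega)]
              unfold AdjGrid; omega

end Snake


section CycleLemmas

variable {N : ℕ} (hN : 3 ≤ N)

include hN in
lemma cycleZMod_adj {a b : ZMod N} :
    (cycleZMod N).Adj a b ↔ b = a + 1 ∨ a = b + 1 := by
  haveI : Fact (1 < N) := ⟨by omega⟩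
  constructor
  · rintro ⟨hne, h | h⟩ <;>
      simp only [Set.mem_insert_iff, Set.mem_singleton_iff] at h <;>
      rcases h with h | h
    · right; linear_combination h
    · left; linear_combination -h
    · left; linear_combination h
    · right; linear_combination -h
  · intro h
    have h1 : (1 : ZMod N) ≠ 0 := one_ne_zero
    have hne : a ≠ b := by
      intro hh; subst hh
      rcases h with h | h <;> exact h1 (by linear_combination -h)
    refine ⟨hne, ?_⟩
    rcases h with h | h
    · right
      simp only [Set.mem_insert_iff, Set.mem_singleton_iff]
      left; rw [h]; exact add_sub_cancel_left a 1
    · left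
      simp only [Set.mem_insert_iff, Set.mem_singleton_iff]
      left; rw [h]; exact add_sub_cancel_left b 1

include hN in
lemma cycleZMod_reachable (a b : ZMod N) : (cycleZMod N).Reachable a b := by
  haveI : NeZero N := ⟨by omega⟩
  suffices h : ∀ k : ℕ, (cycleZMod N).Reachable a (a + (k : ZMod N)) by
    have := h ((b - a).val)
    rwa [ZMod.natCast_val, ZMod.cast_id, add_sub_cancel] at this
  intro k
  induction k with
  | zero => simpa using SimpleGraph.Reachable.refl a
  | succ k ih =>
    refine ih.trans (SimpleGraph.Adj.reachable ?_)
    rw [cycleZMod_adj hN]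
    left; push_cast; ring

include hN in
lemma cycleZMod_ncard (a : ZMod N) : ((cycleZMod N).neighborSet a).ncard = 2 := by
  have h2 : ((2:ℕ) : ZMod N) ≠ 0 := by
    rw [Ne, ZMod.natCast_eq_zero_iff]
    intro h
    have := Nat.le_of_dvd (by norm_num) h
    omega
  have hset : (cycleZMod N).neighborSet a = {a + 1, a - 1} := by
    ext b
    rw [SimpleGraph.mem_neighborSet, cycleZMod_adj hN]
    simp only [Set.mem_insert_iff, Set.mem_singleton_iff]
    constructor
    · rintro (h | h)
      · exact Or.inl h
      · right; linear_combination -h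
    · rintro (h | h)
      · exact Or.inl h
      · right; linear_combination -h
  rw [hset, Set.ncard_pair]
  intro h
  apply h2
  push_cast
  linear_combination h

end CycleLemmas

/-- Disjoint sum of two simple graphs. -/
def sumG {α β : Type*} (G1 : SimpleGraph α) (G2 : SimpleGraph β) : SimpleGraph (α ⊕ β) where
  Adj x y := match x, y with
    | .inl a, .inl b => G1.Adj a b
    | .inr a, .inr b => G2.Adj a b
    | _, _ => False
  symm := ⟨by rintro (a | a) (b | b) h <;> simp_all <;> exact h.symm⟩
  loopless := ⟨by rintro (a | a) h <;> exact SimpleGraph.irrefl _ h⟩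

section SumG

variable {α β : Type*} {G1 : SimpleGraph α} {G2 : SimpleGraph β}

lemma sumG_adj_isLeft {x y : α ⊕ β} (h : (sumG G1 G2).Adj x y) : x.isLeft = y.isLeft := by
  rcases x with a | a <;> rcases y with b | b <;> simp_all [sumG]

lemma sumG_reachable_isLeft {x y : α ⊕ β} (h : (sumG G1 G2).Reachable x y) :
    x.isLeft = y.isLeft := by
  obtain ⟨w⟩ := h
  induction w with
  | nil => rfl
  | cons hadj _ ih => exact (sumG_adj_isLeft hadj).trans ih

lemma sumG_reachable_inl {a b : α} (h : G1.Reachable a b) :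
    (sumG G1 G2).Reachable (Sum.inl a) (Sum.inl b) :=
  h.map ⟨Sum.inl, fun h => h⟩

lemma sumG_reachable_inr {a b : β} (h : G2.Reachable a b) :
    (sumG G1 G2).Reachable (Sum.inr a) (Sum.inr b) :=
  h.map ⟨Sum.inr, fun h => h⟩

lemma sumG_nbhd_inl (a : α) :
    (sumG G1 G2).neighborSet (Sum.inl a) = Sum.inl '' G1.neighborSet a := by
  ext (b | b) <;> simp [sumG, SimpleGraph.mem_neighborSet]

lemma sumG_nbhd_inr (a : β) :
    (sumG G1 G2).neighborSet (Sum.inr a) = Sum.inr '' G2.neighborSet a := by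
  ext (b | b) <;> simp [sumG, SimpleGraph.mem_neighborSet]

end SumG

/-- Embedding of grid coordinates into `Fin m × ZMod n`, with row offset `jb`. -/
def embV (m n : ℕ) [NeZero m] (jb : ZMod n) (x : ℕ × ℕ) : Fin m × ZMod n :=
  (⟨x.1 % m, Nat.mod_lt _ (Nat.pos_of_ne_zero (NeZero.ne m))⟩, jb + (x.2 : ZMod n))

lemma embV_adj {m n : ℕ} [NeZero m] (hn : 3 ≤ n) (jb : ZMod n) {x y : ℕ × ℕ}
    (hx1 : x.1 < m) (hy1 : y.1 < m) (h : AdjGrid x y) :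
    (pathGraph m □ cycleZMod n).Adj (embV m n jb x) (embV m n jb y) := by
  rw [SimpleGraph.boxProd_adj]
  rcases h with ⟨hc, hr⟩ | ⟨hr, hc⟩
  · right
    constructor
    · rw [cycleZMod_adj hn]
      rcases hr with hr | hr
      · left; show jb + (y.2 : ZMod n) = jb + (x.2 : ZMod n) + 1
        rw [← hr]; push_cast; ring
      · right; show jb + (x.2 : ZMod n) = jb + (y.2 : ZMod n) + 1
        rw [← hr]; push_cast; ring
    · show (⟨x.1 % m, _⟩ : Fin m) = ⟨y.1 % m, _⟩
      simp [hc]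
  · left
    constructor
    · rw [pathGraph_adj]
      show x.1 % m + 1 = y.1 % m ∨ y.1 % m + 1 = x.1 % m
      rw [Nat.mod_eq_of_lt hx1, Nat.mod_eq_of_lt hy1]
      omega
    · show jb + (x.2 : ZMod n) = jb + (y.2 : ZMod n)
      rw [hr]


lemma stepAdj {m t n : ℕ} [NeZero m] (hm : 3 ≤ m) (ht : 2 ≤ t) (hn : 3 ≤ n)
    (hteven : t % 2 = 0) (jb : ZMod n) (a : ZMod (m*t)) :
    (pathGraph m □ cycleZMod n).Adj (embV m n jb (Fsnake m t a.val))
      (embV m n jb (Fsnake m t (a+1).val)) := by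
  have hmt : 6 ≤ m * t := by
    calc (6:ℕ) = 3*2 := rfl
    _ ≤ m*t := Nat.mul_le_mul hm ht
  haveI : NeZero (m*t) := ⟨by omega⟩
  haveI : Fact (1 < m*t) := ⟨by omega⟩
  have hval : a.val < m*t := ZMod.val_lt a
  by_cases hav : a.val + 1 < m*t
  · have hsucc : (a + 1).val = a.val + 1 := by
      rw [ZMod.val_add, ZMod.val_one, Nat.mod_eq_of_lt hav]
    rw [hsucc]
    exact embV_adj hn jb (Fsnake_range hm ht hval).1 (Fsnake_range hm ht hav).1
      (Fsnake_adj hm ht hteven hav)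
  · have h1 : a.val = m*t - 1 := by omega
    have h2 : (a+1).val = 0 := by
      rw [ZMod.val_add, ZMod.val_one]
      have h3 : a.val + 1 = m*t := by omega
      rw [h3, Nat.mod_self]
    rw [h1, h2, Fsnake_last hm ht, Fsnake_zero (by omega)]
    exact embV_adj hn jb (by omega) (by omega) (by unfold AdjGrid; omega)

end St5

open St5

/-- For `m ≥ 3` and even `n ≥ 4`, any two distinct vertices in the same
column of `P_m □ C_n` are separated by a 2-factor consisting of two cycles. -/
theorem statement_5 (m n : ℕ) (hm : 3 ≤ m) (hn : 4 ≤ n) (heven : Even n)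
    (i : Fin m) (j j' : ZMod n) (hjj : j ≠ j') :
    ∃ H, IsTwoFactor (pathGraph m □ cycleZMod n) H ∧
      SeparatesSet H {(i, j), (i, j')} := by
  classical
  haveI : NeZero m := ⟨by omega⟩
  haveI : NeZero n := ⟨by omega⟩
  set t : ℕ := n - 2 with htdef
  have ht2 : 2 ≤ t := by omega
  have hteven : t % 2 = 0 := by
    obtain ⟨k, hk⟩ := heven; omega
  have hn3 : 3 ≤ n := by omega
  have hmt6 : 6 ≤ m * t := by
    calc (6:ℕ) = 3*2 := rfl
    _ ≤ m*t := Nat.mul_le_mul hm ht2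
  haveI : NeZero (m*2) := ⟨by omega⟩
  haveI : NeZero (m*t) := ⟨by omega⟩
  have h2ne : ((2:ℕ) : ZMod n) ≠ 0 := by
    rw [Ne, ZMod.natCast_eq_zero_iff]
    intro h
    have := Nat.le_of_dvd (by norm_num) h
    omega
  set j0 : ZMod n := if j' = j - 1 then j else j - 1 with hj0def
  have hj01 : j = j0 ∨ j = j0 + 1 := by
    rw [hj0def]; split_ifs with h
    · exact Or.inl rfl
    · right; ring
  have hj'ne : j' ≠ j0 ∧ j' ≠ j0 + 1 := by
    rw [hj0def]; split_ifs with h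
    · refine ⟨fun hh => hjj hh.symm, fun hh => ?_⟩
      apply h2ne
      push_cast
      linear_combination h - hh
    · refine ⟨h, fun hh => hjj ?_⟩
      rw [hh]; ring
  set G0 : SimpleGraph (ZMod (m*2) ⊕ ZMod (m*t)) :=
    sumG (cycleZMod (m*2)) (cycleZMod (m*t)) with hG0def
  set Φ : ZMod (m*2) ⊕ ZMod (m*t) → Fin m × ZMod n :=
    Sum.elim (fun a => embV m n j0 (Fsnake m 2 a.val))
             (fun b => embV m n (j0 + 2) (Fsnake m t b.val)) with hΦdef
  have castInj : ∀ r s : ℕ, r < n → s < n → ((r : ZMod n) = (s : ZMod n)) → r = s := by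
    intro r s hr hs h
    rw [← ZMod.val_cast_of_lt hr, ← ZMod.val_cast_of_lt hs, h]
  have hembInj : ∀ (jb : ZMod n) (x y : ℕ × ℕ), x.1 < m → y.1 < m → x.2 < n → y.2 < n →
      embV m n jb x = embV m n jb y → x = y := by
    intro jb x y hx1 hy1 hx2 hy2 h
    rw [Prod.ext_iff] at h
    obtain ⟨h1, h2⟩ := h
    have hc : x.1 % m = y.1 % m := congrArg Fin.val h1
    rw [Nat.mod_eq_of_lt hx1, Nat.mod_eq_of_lt hy1] at hc
    have hr : (x.2 : ZMod n) = (y.2 : ZMod n) := by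
      have h2' : jb + (x.2 : ZMod n) = jb + (y.2 : ZMod n) := h2
      exact add_left_cancel h2'
    have hrr := castInj _ _ hx2 hy2 hr
    exact Prod.ext_iff.2 ⟨hc, hrr⟩
  have hcross : ∀ (a : ZMod (m*2)) (b : ZMod (m*t)), Φ (Sum.inl a) ≠ Φ (Sum.inr b) := by
    intro a b h
    have hra := (Fsnake_range hm (by norm_num) (ZMod.val_lt a)).2
    have hrb := (Fsnake_range hm ht2 (ZMod.val_lt b)).2
    have h2 : j0 + ((Fsnake m 2 a.val).2 : ZMod n)
        = (j0 + 2) + ((Fsnake m t b.val).2 : ZMod n) := congrArg Prod.snd h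
    have hcast : (((Fsnake m 2 a.val).2 : ℕ) : ZMod n)
        = (((2 + (Fsnake m t b.val).2 : ℕ)) : ZMod n) := by
      push_cast
      linear_combination h2
    have := castInj _ _ (by omega) (by omega) hcast
    omega
  have hΦinj : Function.Injective Φ := by
    rintro (a | a) (b | b) h
    · have hx := Fsnake_range hm (by norm_num) (ZMod.val_lt a)
      have hy := Fsnake_range hm (by norm_num) (ZMod.val_lt b)
      have := hembInj j0 _ _ hx.1 hy.1 (by omega) (by omega) h
      have hv := Fsnake_inj hm (by norm_num) (ZMod.val_lt a) (ZMod.val_lt b) this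
      exact congrArg Sum.inl (ZMod.val_injective _ hv)
    · exact absurd h (hcross a b)
    · exact absurd h.symm (hcross b a)
    · have hx := Fsnake_range hm ht2 (ZMod.val_lt a)
      have hy := Fsnake_range hm ht2 (ZMod.val_lt b)
      have := hembInj (j0+2) _ _ hx.1 hy.1 (by omega) (by omega) h
      have hv := Fsnake_inj hm ht2 (ZMod.val_lt a) (ZMod.val_lt b) this
      exact congrArg Sum.inr (ZMod.val_injective _ hv)
  have hcard : Fintype.card (ZMod (m*2) ⊕ ZMod (m*t)) = Fintype.card (Fin m × ZMod n) := by
    rw [Fintype.card_sum, Fintype.card_prod, ZMod.card, ZMod.card, Fintype.card_fin, ZMod.card]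
    obtain ⟨n', hn'⟩ : ∃ n', n = n' + 2 := ⟨n - 2, by omega⟩
    have htn' : t = n' := by omega
    rw [htn', hn']; ring
  have hbij : Function.Bijective Φ := (Fintype.bijective_iff_injective_and_card Φ).2 ⟨hΦinj, hcard⟩
  set e : (ZMod (m*2) ⊕ ZMod (m*t)) ≃ (Fin m × ZMod n) := Equiv.ofBijective Φ hbij with hedef
  set H : SimpleGraph (Fin m × ZMod n) := SimpleGraph.map e.toEmbedding G0 with hHdef
  have hΦe : ∀ x, e x = Φ x := fun x => rfl
  -- adjacency transfer
  have hGX : ∀ x y, G0.Adj x y → (pathGraph m □ cycleZMod n).Adj (Φ x) (Φ y) := by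
    rintro (a | a) (b | b) huv
    · rcases (cycleZMod_adj (by omega)).1 huv with h | h
      · rw [h]; exact stepAdj hm (by norm_num) hn3 (by norm_num) j0 a
      · rw [h]; exact (stepAdj hm (by norm_num) hn3 (by norm_num) j0 b).symm
    · exact huv.elim
    · exact huv.elim
    · rcases (cycleZMod_adj (by omega)).1 huv with h | h
      · rw [h]; exact stepAdj hm ht2 hn3 hteven (j0+2) a
      · rw [h]; exact (stepAdj hm ht2 hn3 hteven (j0+2) b).symm
  let homUp : G0 →g H := ⟨Φ, fun {u v} huv => by
    rw [hHdef, SimpleGraph.map_adj]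
    exact ⟨u, v, huv, rfl, rfl⟩⟩
  let homDown : H →g G0 := ⟨e.symm, fun {u v} huv => by
    rw [hHdef, SimpleGraph.map_adj] at huv
    obtain ⟨u', v', h', hu', hv'⟩ := huv
    rw [← hu', ← hv']
    simpa using h'⟩
  -- the two special vertices come from different summands
  have hq0 : ∀ r : ℕ, r < t → j ≠ (j0 + 2) + (r : ZMod n) := by
    intro r hr h
    rcases hj01 with hj | hj
    · have hcast : ((0:ℕ) : ZMod n) = ((2 + r : ℕ) : ZMod n) := by
        push_cast
        linear_combination h - hj
      have := castInj _ _ (by omega) (by omega) hcast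
      omega
    · have hcast : ((1:ℕ) : ZMod n) = ((2 + r : ℕ) : ZMod n) := by
        push_cast
        linear_combination h - hj
      have := castInj _ _ (by omega) (by omega) hcast
      omega
  have hp0 : ∀ r : ℕ, r < 2 → j' ≠ j0 + (r : ZMod n) := by
    intro r hr
    interval_cases r
    · simpa using hj'ne.1
    · simpa using hj'ne.2
  obtain ⟨ap, hap⟩ : ∃ a, Φ (Sum.inl a) = ((i, j) : Fin m × ZMod n) := by
    obtain ⟨x, hx⟩ := hbij.2 (i, j)
    rcases x with a | b
    · exact ⟨a, hx⟩
    · exfalso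
      have hrb := (Fsnake_range hm ht2 (ZMod.val_lt b)).2
      have h2 : (j0 + 2) + ((Fsnake m t b.val).2 : ZMod n) = j := congrArg Prod.snd hx
      exact hq0 _ hrb h2.symm
  obtain ⟨bq, hbq⟩ : ∃ b, Φ (Sum.inr b) = ((i, j') : Fin m × ZMod n) := by
    obtain ⟨x, hx⟩ := hbij.2 (i, j')
    rcases x with a | b
    · exfalso
      have hra := (Fsnake_range hm (by norm_num) (ZMod.val_lt a)).2
      have h2 : j0 + ((Fsnake m 2 a.val).2 : ZMod n) = j' := congrArg Prod.snd hx
      exact hp0 _ hra h2.symm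
    · exact ⟨b, hx⟩
  have reachL : ∀ a : ZMod (m*2), H.Reachable (i, j) (Φ (Sum.inl a)) := by
    intro a
    have h0 : G0.Reachable (Sum.inl ap) (Sum.inl a) :=
      sumG_reachable_inl (cycleZMod_reachable (by omega) _ _)
    have := h0.map homUp
    rwa [show homUp (Sum.inl ap) = ((i,j) : Fin m × ZMod n) from hap] at this
  have reachR : ∀ b : ZMod (m*t), H.Reachable (i, j') (Φ (Sum.inr b)) := by
    intro b
    have h0 : G0.Reachable (Sum.inr bq) (Sum.inr b) :=
      sumG_reachable_inr (cycleZMod_reachable (by omega) _ _)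
    have := h0.map homUp
    rwa [show homUp (Sum.inr bq) = ((i,j') : Fin m × ZMod n) from hbq] at this
  have notReach : ¬ H.Reachable (i, j) (i, j') := by
    intro hre
    have hmap := hre.map homDown
    have hl : e.symm (i, j) = Sum.inl ap := by
      rw [← hap, ← hΦe]
      exact e.symm_apply_apply _
    have hr' : e.symm (i, j') = Sum.inr bq := by
      rw [← hbq, ← hΦe]
      exact e.symm_apply_apply _
    have : G0.Reachable (Sum.inl ap) (Sum.inr bq) := by
      rwa [show homDown (i,j) = e.symm (i,j) from rfl,
        show homDown (i,j') = e.symm (i,j') from rfl, hl, hr'] at hmap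
    simpa using sumG_reachable_isLeft this
  refine ⟨H, ⟨?_, ?_⟩, ?_⟩
  · -- H ≤ X
    intro x y hxy
    rw [hHdef, SimpleGraph.map_adj] at hxy
    obtain ⟨u, v, huv, rfl, rfl⟩ := hxy
    exact hGX u v huv
  · -- degree 2
    intro v
    have hnb : H.neighborSet v = ⇑e '' (G0.neighborSet (e.symm v)) := by
      ext w
      simp only [SimpleGraph.mem_neighborSet, hHdef, SimpleGraph.map_adj, Set.mem_image,
        Equiv.coe_toEmbedding]
      constructor
      · rintro ⟨-, u1, u2, huv, h1, h2⟩
        refine ⟨u2, ?_, h2⟩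
        have hu1 : u1 = e.symm v := by rw [← h1]; exact (e.symm_apply_apply u1).symm
        rwa [← hu1]
      · rintro ⟨u2, hu2, rfl⟩
        exact ⟨fun h => hu2.ne (by rw [h]; exact e.symm_apply_apply u2), e.symm v, u2, hu2, e.apply_symm_apply v, rfl⟩
    rw [hnb, Set.ncard_image_of_injective _ e.injective]
    rcases hx : e.symm v with a | a
    · rw [hG0def, sumG_nbhd_inl, Set.ncard_image_of_injective _ Sum.inl_injective]
      exact cycleZMod_ncard (by omega) a
    · rw [hG0def, sumG_nbhd_inr, Set.ncard_image_of_injective _ Sum.inr_injective]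
      exact cycleZMod_ncard (by omega) a
  · -- separates
    intro C
    obtain ⟨v, hv⟩ := C.exists_rep
    obtain ⟨x, rfl⟩ := hbij.2 v
    rcases x with a | b
    · refine ⟨(i, j), ⟨by simp, ?_⟩, ?_⟩
      · rw [← hv]
        exact SimpleGraph.ConnectedComponent.sound (reachL a)
      · rintro y ⟨hy, hyC⟩
        have hy' : y = ((i,j) : Fin m × ZMod n) ∨ y = (i,j') := by simpa using hy
        rcases hy' with rfl | rfl
        · rfl
        · exfalso
          apply notReach
          have h1 : H.Reachable (i,j') (Φ (Sum.inl a)) :=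
            SimpleGraph.ConnectedComponent.eq.mp (hyC.trans hv.symm)
          exact (reachL a).trans h1.symm
    · refine ⟨(i, j'), ⟨by simp, ?_⟩, ?_⟩
      · rw [← hv]
        exact SimpleGraph.ConnectedComponent.sound (reachR b)
      · rintro y ⟨hy, hyC⟩
        have hy' : y = ((i,j) : Fin m × ZMod n) ∨ y = (i,j') := by simpa using hy
        rcases hy' with rfl | rfl
        · exfalso
          apply notReach
          have h1 : H.Reachable (i,j) (Φ (Sum.inr b)) :=
            SimpleGraph.ConnectedComponent.eq.mp (hyC.trans hv.symm)
          exact h1.trans (reachR b).symm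
        · rfl
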